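/- Let n ≥ 4 be an integer, H = (n-1)/n and d ∈ ℝ. Choose ρ₀ > 0 such that M_{H,d} > 0 and P_{H,d} > 0 on [ρ₀, ∞), and define λ(ρ) := ∫_{ρ₀}^{ρ} Q_{H,d}(t) dt. Then there exist positive constants a and b such that lim_{ρ→∞} e^{−bρ}·λ(ρ) = a. -/

import Mathlib

open Filter Topology MeasureTheory intervalIntegral

/-- `Ifun m t = ∫₀ᵗ sinh^m(r) dr`. -/
noncomputable def Ifun (m : ℕ) (t : ℝ) : ℝ := ∫ r in (0:ℝ)..t, Real.sinh r ^ m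

/-- `Mfun n H d t = sinh^{n-1}(t) − nH·I_{n-1}(t) − d`. -/
noncomputable def Mfun (n : ℕ) (H d t : ℝ) : ℝ :=
  Real.sinh t ^ (n - 1) - n * H * Ifun (n - 1) t - d

/-- `Pfun n H d t = sinh^{n-1}(t) + nH·I_{n-1}(t) + d`. -/
noncomputable def Pfun (n : ℕ) (H d t : ℝ) : ℝ :=
  Real.sinh t ^ (n - 1) + n * H * Ifun (n - 1) t + d

/-- `Qfun n H d t = (nH·I_{n-1}(t) + d)/√(M·P)`. -/
noncomputable def Qfun (n : ℕ) (H d t : ℝ) : ℝ :=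
  (n * H * Ifun (n - 1) t + d) / Real.sqrt (Mfun n H d t * Pfun n H d t)

lemma sinh_pow_ii (m : ℕ) (a b : ℝ) :
    IntervalIntegrable (fun r => Real.sinh r ^ m) volume a b :=
  (Real.continuous_sinh.pow m).intervalIntegrable a b

lemma Ifun_hasDerivAt (m : ℕ) (t : ℝ) : HasDerivAt (Ifun m) (Real.sinh t ^ m) t :=
  integral_hasDerivAt_right (sinh_pow_ii m 0 t)
    ((Real.continuous_sinh.pow m).stronglyMeasurableAtFilter _ _)
    (Real.continuous_sinh.pow m).continuousAt

lemma Ifun_continuous (m : ℕ) : Continuous (Ifun m) := by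
  have : Differentiable ℝ (Ifun m) := fun t => (Ifun_hasDerivAt m t).differentiableAt
  exact this.continuous

lemma integral_exp_mul (b T ρ : ℝ) (hb : 0 < b) :
    ∫ t in T..ρ, Real.exp (b*t) = (Real.exp (b*ρ) - Real.exp (b*T)) / b := by
  have : ∀ t ∈ Set.uIcc T ρ, HasDerivAt (fun t => Real.exp (b*t)/b) (Real.exp (b*t)) t := by
    intro t _
    have h1 : HasDerivAt (fun t : ℝ => b*t) b t := by simpa using (hasDerivAt_id t).const_mul b
    have := (h1.exp).div_const b
    simpa [mul_div_assoc, mul_comm, mul_div_cancel_left₀ _ hb.ne'] using this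
  have := intervalIntegral.integral_eq_sub_of_hasDerivAt this
    ((Real.continuous_exp.comp (continuous_const.mul continuous_id)).intervalIntegrable T ρ)
  rw [this]; ring

lemma exp_neg_mul_tendsto (b : ℝ) (hb : 0 < b) :
    Tendsto (fun ρ : ℝ => Real.exp (-(b*ρ))) atTop (𝓝 0) := by
  apply Real.tendsto_exp_atBot.comp
  exact tendsto_neg_atBot_iff.mpr (tendsto_id.const_mul_atTop hb)

lemma aux_zero (b t₀ : ℝ) (hb : 0 < b) (g : ℝ → ℝ)
    (hint : ∀ ρ, t₀ ≤ ρ → IntervalIntegrable g volume t₀ ρ)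
    (h : Tendsto (fun t => g t * Real.exp (-(b*t))) atTop (𝓝 0)) :
    Tendsto (fun ρ => Real.exp (-(b*ρ)) * ∫ t in t₀..ρ, g t) atTop (𝓝 0) := by
  rw [Metric.tendsto_atTop]
  intro ε hε
  obtain ⟨T₀, hT₀⟩ := (Metric.tendsto_atTop.mp h) (ε*b/4) (by positivity)
  set T := max T₀ t₀ with hT
  have hTt₀ : t₀ ≤ T := le_max_right _ _
  set C := |∫ t in t₀..T, g t| with hC
  have h2 : Tendsto (fun ρ : ℝ => C * Real.exp (-(b*ρ))) atTop (𝓝 0) := by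
    simpa using (exp_neg_mul_tendsto b hb).const_mul C
  obtain ⟨N₀, hN₀⟩ := (Metric.tendsto_atTop.mp h2) (ε/4) (by positivity)
  refine ⟨max T N₀, fun ρ hρ => ?_⟩
  have hρT : T ≤ ρ := le_trans (le_max_left _ _) hρ
  have hρt₀ : t₀ ≤ ρ := hTt₀.trans hρT
  have hTρ : IntervalIntegrable g volume T ρ := (hint T hTt₀).symm.trans (hint ρ hρt₀)
  have hsplit : ∫ t in t₀..ρ, g t = (∫ t in t₀..T, g t) + ∫ t in T..ρ, g t :=
    (integral_add_adjacent_intervals (hint T hTt₀) hTρ).symm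
  have hptbd : ∀ t ∈ Set.Icc T ρ, |g t| ≤ ε*b/4 * Real.exp (b*t) := by
    intro t ht
    have h1 : |g t * Real.exp (-(b*t))| ≤ ε*b/4 := by
      have := hT₀ t (le_trans (le_max_left _ _) ht.1)
      rw [Real.dist_eq, sub_zero] at this
      exact this.le
    have h2 : |g t| = |g t * Real.exp (-(b*t))| * Real.exp (b*t) := by
      rw [abs_mul, abs_of_pos (Real.exp_pos _), mul_assoc, ← Real.exp_add]
      simp
    rw [h2]
    exact mul_le_mul_of_nonneg_right h1 (Real.exp_pos _).le
  have habs : |∫ t in T..ρ, g t| ≤ ε/4 * Real.exp (b*ρ) := by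
    calc |∫ t in T..ρ, g t| ≤ ∫ t in T..ρ, |g t| :=
          intervalIntegral.abs_integral_le_integral_abs hρT
      _ ≤ ∫ t in T..ρ, ε*b/4 * Real.exp (b*t) := by
          apply intervalIntegral.integral_mono_on hρT hTρ.abs
          · exact (continuous_const.mul (Real.continuous_exp.comp
              (continuous_const.mul continuous_id))).intervalIntegrable T ρ
          · exact hptbd
      _ = ε*b/4 * ((Real.exp (b*ρ) - Real.exp (b*T)) / b) := by
          rw [intervalIntegral.integral_const_mul, integral_exp_mul b T ρ hb]
      _ = ε/4 * (Real.exp (b*ρ) - Real.exp (b*T)) := by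
          field_simp
      _ ≤ ε/4 * Real.exp (b*ρ) := by
          have := (Real.exp_pos (b*T)).le
          nlinarith
  rw [Real.dist_eq, sub_zero, abs_mul, abs_of_pos (Real.exp_pos _)]
  have hCe : C * Real.exp (-(b*ρ)) < ε/4 := by
    have := hN₀ ρ (le_trans (le_max_right _ _) hρ)
    rw [Real.dist_eq, sub_zero] at this
    calc C * Real.exp (-(b*ρ)) ≤ |C * Real.exp (-(b*ρ))| := le_abs_self _
      _ < ε/4 := this
  calc Real.exp (-(b*ρ)) * |∫ t in t₀..ρ, g t|
      ≤ Real.exp (-(b*ρ)) * (C + ε/4 * Real.exp (b*ρ)) := by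
        apply mul_le_mul_of_nonneg_left _ (Real.exp_pos _).le
        rw [hsplit]
        exact (abs_add_le _ _).trans (add_le_add le_rfl habs)
    _ = C * Real.exp (-(b*ρ)) + ε/4 * (Real.exp (-(b*ρ)) * Real.exp (b*ρ)) := by ring
    _ = C * Real.exp (-(b*ρ)) + ε/4 := by rw [← Real.exp_add]; simp
    _ < ε/4 + ε/4 := by linarith
    _ < ε := by linarith

lemma cesaro (b t₀ L : ℝ) (hb : 0 < b) (f : ℝ → ℝ)
    (hint : ∀ ρ, t₀ ≤ ρ → IntervalIntegrable f volume t₀ ρ)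
    (h : Tendsto (fun t => f t * Real.exp (-(b*t))) atTop (𝓝 L)) :
    Tendsto (fun ρ => Real.exp (-(b*ρ)) * ∫ t in t₀..ρ, f t) atTop (𝓝 (L/b)) := by
  set g := fun t => f t - L * Real.exp (b*t) with hg
  have hexpc : Continuous (fun t : ℝ => L * Real.exp (b*t)) :=
    continuous_const.mul (Real.continuous_exp.comp (continuous_const.mul continuous_id))
  have hgint : ∀ ρ, t₀ ≤ ρ → IntervalIntegrable g volume t₀ ρ := fun ρ hρ =>
    (hint ρ hρ).sub (hexpc.intervalIntegrable t₀ ρ)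
  have hglim : Tendsto (fun t => g t * Real.exp (-(b*t))) atTop (𝓝 0) := by
    have heq : ∀ t, g t * Real.exp (-(b*t)) = f t * Real.exp (-(b*t)) - L := by
      intro t
      have : Real.exp (b*t) * Real.exp (-(b*t)) = 1 := by rw [← Real.exp_add]; simp
      simp only [hg, sub_mul, mul_assoc, this, mul_one]
    simp only [heq]
    simpa using h.sub_const L
  have haux := aux_zero b t₀ hb g hgint hglim
  have key : ∀ ρ, t₀ ≤ ρ → Real.exp (-(b*ρ)) * ∫ t in t₀..ρ, f t
      = Real.exp (-(b*ρ)) * (∫ t in t₀..ρ, g t) + (L/b - L/b * Real.exp (b*t₀) * Real.exp (-(b*ρ))) := by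
    intro ρ hρ
    have hsplit : ∫ t in t₀..ρ, f t
        = (∫ t in t₀..ρ, g t) + L * ((Real.exp (b*ρ) - Real.exp (b*t₀))/b) := by
      have : ∫ t in t₀..ρ, (L * Real.exp (b*t)) = L * ((Real.exp (b*ρ) - Real.exp (b*t₀))/b) := by
        rw [intervalIntegral.integral_const_mul, integral_exp_mul b t₀ ρ hb]
      rw [← this, ← intervalIntegral.integral_add (hgint ρ hρ) (hexpc.intervalIntegrable t₀ ρ)]
      congr 1
      ext t
      simp [hg]
    rw [hsplit, mul_add]
    congr 1
    have h1 : Real.exp (-(b*ρ)) * Real.exp (b*ρ) = 1 := by rw [← Real.exp_add]; simp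
    linear_combination (L/b) * h1
  have hlim2 : Tendsto (fun ρ => Real.exp (-(b*ρ)) * (∫ t in t₀..ρ, g t)
      + (L/b - L/b * Real.exp (b*t₀) * Real.exp (-(b*ρ)))) atTop (𝓝 (L/b)) := by
    have h3 : Tendsto (fun ρ : ℝ => L/b - L/b * Real.exp (b*t₀) * Real.exp (-(b*ρ))) atTop (𝓝 (L/b)) := by
      have := (exp_neg_mul_tendsto b hb).const_mul (L/b * Real.exp (b*t₀))
      simpa using (tendsto_const_nhds (x := L/b)).sub this
    simpa using haux.add h3
  apply hlim2.congr'
  filter_upwards [eventually_ge_atTop t₀] with ρ hρ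
  exact (key ρ hρ).symm

lemma tendsto_sinh_exp : Tendsto (fun t => Real.sinh t * Real.exp (-t)) atTop (𝓝 (1/2)) := by
  have heq : ∀ t : ℝ, Real.sinh t * Real.exp (-t) = (1 - Real.exp (-(2*t)))/2 := by
    intro t
    have h1 : Real.exp t * Real.exp (-t) = 1 := by rw [← Real.exp_add]; simp
    have h2 : Real.exp (-t) * Real.exp (-t) = Real.exp (-(2*t)) := by
      rw [← Real.exp_add]; ring_nf
    rw [Real.sinh_eq]
    linear_combination h1/2 - h2/2
  simp only [heq]
  have := (tendsto_const_nhds (x := (1:ℝ))).sub (exp_neg_mul_tendsto 2 (by norm_num))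
  simpa using this.div_const 2

lemma tendsto_sinh_pow (m : ℕ) :
    Tendsto (fun t => Real.sinh t ^ m * Real.exp (-((m:ℝ)*t))) atTop (𝓝 ((1/2)^m)) := by
  have heq : ∀ t : ℝ, Real.sinh t ^ m * Real.exp (-((m:ℝ)*t))
      = (Real.sinh t * Real.exp (-t)) ^ m := by
    intro t
    rw [mul_pow, ← Real.exp_nat_mul]
    ring_nf
  simp only [heq]
  exact tendsto_sinh_exp.pow m

lemma tendsto_Ifun (m : ℕ) (hm : 1 ≤ m) :
    Tendsto (fun ρ => Real.exp (-((m:ℝ)*ρ)) * Ifun m ρ) atTop (𝓝 ((1/2)^m / m)) := by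
  have hmpos : (0:ℝ) < m := by exact_mod_cast hm
  exact cesaro m 0 ((1/2)^m) hmpos (fun r => Real.sinh r ^ m)
    (fun ρ _ => sinh_pow_ii m 0 ρ) (tendsto_sinh_pow m)

lemma sinh_identity (k : ℕ) (t : ℝ) :
    ((k:ℝ)+3) * Ifun (k+3) t = Real.sinh t ^ (k+2) * Real.cosh t - ((k:ℝ)+2) * Ifun (k+1) t := by
  have hF : ∀ s : ℝ, HasDerivAt (fun u => Real.sinh u ^ (k+2) * Real.cosh u)
      (((k:ℝ)+3) * Real.sinh s ^ (k+3) + ((k:ℝ)+2) * Real.sinh s ^ (k+1)) s := by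
    intro s
    have h1 : HasDerivAt (fun u => Real.sinh u ^ (k+2))
        ((((k:ℕ)+2:ℕ):ℝ) * Real.sinh s ^ (k+1) * Real.cosh s) s := by
      simpa using (Real.hasDerivAt_sinh s).fun_pow (k+2)
    have h2 := h1.fun_mul (Real.hasDerivAt_cosh s)
    refine h2.congr_deriv ?_
    have hc : Real.cosh s ^ 2 = Real.sinh s ^ 2 + 1 := Real.cosh_sq s
    push_cast
    linear_combination (((k:ℝ)+2) * Real.sinh s ^ (k+1)) * hc
  have hint : ∫ s in (0:ℝ)..t, (((k:ℝ)+3) * Real.sinh s ^ (k+3) + ((k:ℝ)+2) * Real.sinh s ^ (k+1))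
      = Real.sinh t ^ (k+2) * Real.cosh t := by
    rw [intervalIntegral.integral_eq_sub_of_hasDerivAt (fun s _ => hF s)
      (((continuous_const.mul (Real.continuous_sinh.pow (k+3))).add
        (continuous_const.mul (Real.continuous_sinh.pow (k+1)))).intervalIntegrable 0 t)]
    simp
  rw [intervalIntegral.integral_add
      ((continuous_const.fun_mul (Real.continuous_sinh.fun_pow (k+3))).intervalIntegrable 0 t)
      ((continuous_const.fun_mul (Real.continuous_sinh.fun_pow (k+1))).intervalIntegrable 0 t),
    intervalIntegral.integral_const_mul, intervalIntegral.integral_const_mul] at hint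
  unfold Ifun
  linarith [hint]
/-- Let `n ≥ 4`, `H = (n-1)/n` and `d ∈ ℝ`. Let `ρ₀ > 0` be such that `M_{H,d} > 0` and
`P_{H,d} > 0` on `[ρ₀, ∞)`, and set `λ(ρ) := ∫_{ρ₀}^{ρ} Q_{H,d}(t) dt`. Then there exist
positive constants `a`, `b` with `lim_{ρ→∞} e^{−bρ}·λ(ρ) = a`. -/
theorem stmt11 (n : ℕ) (hn : 4 ≤ n) (H d : ℝ) (hH : H = ((n : ℝ) - 1) / n)
    (ρ₀ : ℝ) (hρ₀ : 0 < ρ₀)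
    (hMP : ∀ t, ρ₀ ≤ t → 0 < Mfun n H d t ∧ 0 < Pfun n H d t) :
    ∃ a b : ℝ, 0 < a ∧ 0 < b ∧
      Tendsto (fun ρ : ℝ => Real.exp (-b * ρ) * ∫ t in ρ₀..ρ, Qfun n H d t) atTop (𝓝 a) := by
  obtain ⟨m, rfl⟩ : ∃ m, n = m + 4 := ⟨n - 4, by omega⟩
  have hnH : ((m+4:ℕ):ℝ) * H = (m:ℝ) + 3 := by
    rw [hH]; push_cast
    have : ((m:ℝ)+4) ≠ 0 := by positivity
    field_simp
    ring
  have hsub : (m + 4) - 1 = m + 3 := rfl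
  set LM : ℝ := -(1/2:ℝ)^(m+2) + (((m:ℝ)+2) * ((1/2:ℝ)^(m+1) / ((m:ℝ)+1)) - d * 0) with hLM
  set LP : ℝ := (1/2:ℝ)^(m+3) + (((m:ℝ)+3) * ((1/2:ℝ)^(m+3) / ((m:ℝ)+3)) + d * 0) with hLP
  set LN : ℝ := ((m:ℝ)+3) * ((1/2:ℝ)^(m+3) / ((m:ℝ)+3)) + d * 0 with hLN
  -- basic limits
  have hIm1 : Tendsto (fun ρ => Real.exp (-(((m:ℝ)+1)*ρ)) * Ifun (m+1) ρ) atTop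
      (𝓝 ((1/2:ℝ)^(m+1) / ((m:ℝ)+1))) := by
    have := tendsto_Ifun (m+1) (by omega)
    push_cast at this
    exact this
  have hIm3 : Tendsto (fun ρ => Real.exp (-(((m:ℝ)+3)*ρ)) * Ifun (m+3) ρ) atTop
      (𝓝 ((1/2:ℝ)^(m+3) / ((m:ℝ)+3))) := by
    have := tendsto_Ifun (m+3) (by omega)
    push_cast at this
    exact this
  have hS2 : Tendsto (fun t => Real.sinh t ^ (m+2) * Real.exp (-(((m:ℝ)+2)*t))) atTop
      (𝓝 ((1/2:ℝ)^(m+2))) := by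
    have := tendsto_sinh_pow (m+2); push_cast at this; exact this
  have hS3 : Tendsto (fun t => Real.sinh t ^ (m+3) * Real.exp (-(((m:ℝ)+3)*t))) atTop
      (𝓝 ((1/2:ℝ)^(m+3))) := by
    have := tendsto_sinh_pow (m+3); push_cast at this; exact this
  have hd1 := (exp_neg_mul_tendsto ((m:ℝ)+1) (by positivity)).const_mul d
  have hd3 := (exp_neg_mul_tendsto ((m:ℝ)+3) (by positivity)).const_mul d
  -- limit of numerator
  have hNlim : Tendsto (fun t => (((m+4:ℕ):ℝ) * H * Ifun (m+3) t + d)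
      * Real.exp (-(((m:ℝ)+3)*t))) atTop (𝓝 LN) := by
    have h4 := (hIm3.const_mul ((m:ℝ)+3)).add hd3
    apply h4.congr
    intro t
    rw [hnH]
    ring
  -- limit of P
  have hPlim : Tendsto (fun t => Pfun (m+4) H d t * Real.exp (-(((m:ℝ)+3)*t))) atTop (𝓝 LP) := by
    have h4 := hS3.add ((hIm3.const_mul ((m:ℝ)+3)).add hd3)
    apply h4.congr
    intro t
    simp only [Pfun, hsub]
    rw [hnH]
    ring
  -- limit of M
  have hMlim : Tendsto (fun t => Mfun (m+4) H d t * Real.exp (-(((m:ℝ)+1)*t))) atTop (𝓝 LM) := by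
    have h4 := hS2.neg.add ((hIm1.const_mul ((m:ℝ)+2)).sub hd1)
    have h4' : Tendsto (fun t => -(Real.sinh t ^ (m+2) * Real.exp (-(((m:ℝ)+2)*t)))
        + (((m:ℝ)+2) * (Real.exp (-(((m:ℝ)+1)*t)) * Ifun (m+1) t)
          - d * Real.exp (-(((m:ℝ)+1)*t)))) atTop (𝓝 LM) := h4
    apply h4'.congr
    intro t
    have hId := sinh_identity m t
    have hcs : Real.cosh t - Real.sinh t = Real.exp (-t) := Real.cosh_sub_sinh t
    have he : Real.exp (-(((m:ℝ)+2)*t)) = Real.exp (-t) * Real.exp (-(((m:ℝ)+1)*t)) := by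
      rw [← Real.exp_add]; ring_nf
    simp only [Mfun, hsub]
    rw [hnH]
    linear_combination (Real.exp (-(((m:ℝ)+1)*t))) * hId
      + (-(Real.sinh t^(m+2))) * he
      + ((Real.sinh t^(m+2) * Real.exp (-(((m:ℝ)+1)*t)))) * hcs
  -- positivity of limits
  have hhalf : (0:ℝ) < (1/2:ℝ)^(m+1) := by positivity
  have hLMpos : 0 < LM := by
    rw [hLM]
    have hps : (1/2:ℝ)^(m+2) = (1/2:ℝ)^(m+1) * (1/2) := pow_succ _ _
    have hm1 : (0:ℝ) < (m:ℝ)+1 := by positivity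
    have h1 : (1/2:ℝ)^(m+1) ≤ ((m:ℝ)+2) * ((1/2:ℝ)^(m+1) / ((m:ℝ)+1)) := by
      rw [mul_div_assoc', le_div_iff₀ hm1]
      nlinarith
    nlinarith
  have hLNpos : 0 < LN := by
    rw [hLN]
    have h2 : (0:ℝ) < (m:ℝ)+3 := by positivity
    have h3 : (0:ℝ) < (1/2:ℝ)^(m+3) / ((m:ℝ)+3) := by positivity
    nlinarith [mul_pos h2 h3]
  have hLPpos : 0 < LP := by
    rw [hLP]
    have h4 : (0:ℝ) < (1/2:ℝ)^(m+3) := by positivity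
    exact add_pos h4 hLNpos
  have hsqrtpos : 0 < Real.sqrt (LM * LP) := Real.sqrt_pos.mpr (mul_pos hLMpos hLPpos)
  set a₀ : ℝ := LN / Real.sqrt (LM * LP) with ha₀def
  have ha₀ : 0 < a₀ := div_pos hLNpos hsqrtpos
  -- limit of Q * exp(-t)
  have hQlim : Tendsto (fun t => Qfun (m+4) H d t * Real.exp (-(1*t))) atTop (𝓝 a₀) := by
    have hsq : Tendsto (fun t => Real.sqrt ((Mfun (m+4) H d t * Real.exp (-(((m:ℝ)+1)*t)))
        * (Pfun (m+4) H d t * Real.exp (-(((m:ℝ)+3)*t))))) atTop (𝓝 (Real.sqrt (LM * LP))) :=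
      (Real.continuous_sqrt.tendsto _).comp (hMlim.mul hPlim)
    have hbase := hNlim.div hsq hsqrtpos.ne'
    apply hbase.congr'
    filter_upwards [eventually_ge_atTop ρ₀] with t ht
    obtain ⟨hM0, hP0⟩ := hMP t ht
    have he2 : Real.exp (-(((m:ℝ)+1)*t)) * Real.exp (-(((m:ℝ)+3)*t))
        = Real.exp (-(((m:ℝ)+2)*t)) ^ 2 := by
      rw [← Real.exp_add, sq, ← Real.exp_add]; ring_nf
    have he3 : Real.exp (-(((m:ℝ)+3)*t)) = Real.exp (-(((m:ℝ)+2)*t)) * Real.exp (-t) := by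
      rw [← Real.exp_add]; ring_nf
    have hs : Real.sqrt ((Mfun (m+4) H d t * Real.exp (-(((m:ℝ)+1)*t)))
        * (Pfun (m+4) H d t * Real.exp (-(((m:ℝ)+3)*t))))
        = Real.sqrt (Mfun (m+4) H d t * Pfun (m+4) H d t) * Real.exp (-(((m:ℝ)+2)*t)) := by
      rw [show (Mfun (m+4) H d t * Real.exp (-(((m:ℝ)+1)*t)))
          * (Pfun (m+4) H d t * Real.exp (-(((m:ℝ)+3)*t)))
          = (Mfun (m+4) H d t * Pfun (m+4) H d t) * Real.exp (-(((m:ℝ)+2)*t)) ^ 2 by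
            rw [← he2]; ring]
      rw [Real.sqrt_mul (mul_pos hM0 hP0).le, Real.sqrt_sq (Real.exp_pos _).le]
    have hMPs : 0 < Real.sqrt (Mfun (m+4) H d t * Pfun (m+4) H d t) :=
      Real.sqrt_pos.mpr (mul_pos hM0 hP0)
    simp only [Pi.div_apply, Qfun, hsub, one_mul]
    rw [hs, he3]
    field_simp
  -- integrability of Q
  have hMc : Continuous (Mfun (m+4) H d) := by
    unfold Mfun
    exact ((Real.continuous_sinh.pow _).sub (continuous_const.mul (Ifun_continuous _))).sub
      continuous_const
  have hPc : Continuous (Pfun (m+4) H d) := by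
    unfold Pfun
    exact ((Real.continuous_sinh.pow _).add (continuous_const.mul (Ifun_continuous _))).add
      continuous_const
  have hQcont : ContinuousOn (Qfun (m+4) H d) (Set.Ici ρ₀) := by
    unfold Qfun
    apply ContinuousOn.div
    · exact ((continuous_const.mul (Ifun_continuous _)).add continuous_const).continuousOn
    · exact (Real.continuous_sqrt.comp (hMc.mul hPc)).continuousOn
    · intro t ht
      exact (Real.sqrt_pos.mpr (mul_pos (hMP t ht).1 (hMP t ht).2)).ne'
  have hQint : ∀ ρ, ρ₀ ≤ ρ → IntervalIntegrable (Qfun (m+4) H d) volume ρ₀ ρ := by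
    intro ρ hρ
    apply (hQcont.mono _).intervalIntegrable
    rw [Set.uIcc_of_le hρ]
    exact Set.Icc_subset_Ici_self
  refine ⟨a₀, 1, ha₀, one_pos, ?_⟩
  have hfin := cesaro 1 ρ₀ a₀ one_pos (Qfun (m+4) H d) hQint hQlim
  simp only [one_mul, div_one] at hfin
  apply hfin.congr
  intro ρ
  norm_num
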